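/- Let f : H → G be a homomorphism of Hilbert algebras. For an upset U of X(H), define ĝ(U) = {P ∈ X(G) : every Q ∈ X(H) with f⁻¹(P) ⊆ Q satisfies Q ∈ U}. Then: (i) ĝ(U) is an upset of X(G) for every upset U of X(H); (ii) ĝ(X(H)) = X(G); (iii) ĝ(U ∩ V) = ĝ(U) ∩ ĝ(V) for all upsets U, V of X(H); and (iv) ĝ(U ⇒ V) = ĝ(U) ⇒ ĝ(V) for all upsets U, V of X(H). -/

import Mathlib

/-- A Hilbert algebra `(H, →, 1)`. -/
structure HilbertAlgebra (H : Type*) where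
  imp : H → H → H
  one : H
  ax1 : ∀ a b : H, imp a (imp b a) = one
  ax2 : ∀ a b c : H, imp (imp a (imp b c)) (imp (imp a b) (imp a c)) = one
  ax3 : ∀ a b : H, imp a b = one → imp b a = one → a = b

namespace HilbertAlgebra

variable {H : Type*} (hH : HilbertAlgebra H)

/-- The natural order: `a ≤ b` iff `a → b = 1`. -/
def le (a b : H) : Prop := hH.imp a b = hH.one

/-- Implicative filter. -/
def IsImplicativeFilter (F : Set H) : Prop :=
  hH.one ∈ F ∧ ∀ a b : H, a ∈ F → hH.imp a b ∈ F → b ∈ F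

/-- Irreducible implicative filter. -/
def IsIrreducible (F : Set H) : Prop :=
  hH.IsImplicativeFilter F ∧ F ≠ Set.univ ∧
    ∀ F₁ F₂ : Set H, hH.IsImplicativeFilter F₁ → hH.IsImplicativeFilter F₂ →
      F = F₁ ∩ F₂ → (F = F₁ ∨ F = F₂)

/-- Order-ideal: nonempty, downward closed, up-directed (w.r.t. the natural order). -/
def IsOrderIdeal (I : Set H) : Prop :=
  I.Nonempty ∧ (∀ a b : H, b ∈ I → hH.le a b → a ∈ I) ∧
    ∀ a b : H, a ∈ I → b ∈ I → ∃ c ∈ I, hH.le a c ∧ hH.le b c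

/-- `φ(a) = {P ∈ X(H) : a ∈ P}`. -/
def phi (a : H) : Set (Set H) := {P | hH.IsIrreducible P ∧ a ∈ P}

/-- An upset of `X(H)` (the poset of irreducible implicative filters, ordered by `⊆`). -/
def IsUpsetX (U : Set (Set H)) : Prop :=
  (∀ P ∈ U, hH.IsIrreducible P) ∧
    ∀ P Q : Set H, P ∈ U → hH.IsIrreducible Q → P ⊆ Q → Q ∈ U

/-- The Heyting implication `U ⇒ V` on upsets of `X(H)`. -/
def impUps (U V : Set (Set H)) : Set (Set H) :=
  {P | hH.IsIrreducible P ∧ ∀ Q : Set H, hH.IsIrreducible Q → P ⊆ Q → Q ∈ U → Q ∈ V}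

/-- `FC(H)`: finite nonempty intersections of sets of the form `φ(a)`. -/
def FC : Set (Set (Set H)) :=
  {U | ∃ l : List H, l ≠ [] ∧ U = ⋂ a ∈ l, hH.phi a}

/-- `X*(H)`: implicative filters that are intersections of finitely many (at least one)
irreducible implicative filters. -/
def XStar : Set (Set H) :=
  {F | ∃ S : Set (Set H), S.Finite ∧ S.Nonempty ∧ (∀ P ∈ S, hH.IsIrreducible P) ∧ F = ⋂₀ S}

/-- `Φ(a) = {F ∈ X*(H) : a ∈ F}`. -/
def Phi (a : H) : Set (Set H) := {F | F ∈ hH.XStar ∧ a ∈ F}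

/-- An upset of `X*(H)` (ordered by `⊆`). -/
def IsUpsetXStar (U : Set (Set H)) : Prop :=
  (∀ F ∈ U, F ∈ hH.XStar) ∧
    ∀ F K : Set H, F ∈ U → K ∈ hH.XStar → F ⊆ K → K ∈ U

/-- The implication `U ⇒ V` on upsets of `X*(H)`. -/
def impUpsStar (U V : Set (Set H)) : Set (Set H) :=
  {F | F ∈ hH.XStar ∧ ∀ K : Set H, K ∈ hH.XStar → F ⊆ K → K ∈ U → K ∈ V}

/-- Homomorphism of Hilbert algebras. -/
def IsHom {G : Type*} (hG : HilbertAlgebra G) (f : H → G) : Prop :=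
  f hH.one = hG.one ∧ ∀ a b : H, f (hH.imp a b) = hG.imp (f a) (f b)

end HilbertAlgebra

/-- A Hilbert algebra with supremum: `(H, ∨)` is a join-semilattice whose induced
order has greatest element `1`, and `a → b = 1` iff `a ∨ b = b`. -/
structure HilbertSup (H : Type*) extends HilbertAlgebra H where
  sup : H → H → H
  sup_comm : ∀ a b : H, sup a b = sup b a
  sup_assoc : ∀ a b c : H, sup (sup a b) c = sup a (sup b c)
  sup_idem : ∀ a : H, sup a a = a
  sup_one : ∀ a : H, sup a one = one
  imp_eq_one_iff : ∀ a b : H, imp a b = one ↔ sup a b = b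

/-- Morphism of Hilbert algebras with supremum. -/
def HilbertSup.IsHomSup {H G : Type*} (hH : HilbertSup H) (hG : HilbertSup G)
    (f : H → G) : Prop :=
  hH.toHilbertAlgebra.IsHom hG.toHilbertAlgebra f ∧
    ∀ a b : H, f (hH.sup a b) = hG.sup (f a) (f b)

/-- An implicative semilattice: a meet-semilattice with greatest element and a binary
operation `him` such that `a ⊓ b ≤ c ↔ a ≤ him b c`. -/
class ImplicativeSemilattice (G : Type*) extends SemilatticeInf G, OrderTop G where
  him : G → G → G
  inf_le_iff_le_him : ∀ a b c : G, a ⊓ b ≤ c ↔ a ≤ him b c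

/-- `ĝ(U) = {P ∈ X(G) : every Q ∈ X(H) with f⁻¹(P) ⊆ Q satisfies Q ∈ U}`. -/
def ghat {H G : Type*} (hH : HilbertAlgebra H) (hG : HilbertAlgebra G) (f : H → G)
    (U : Set (Set H)) : Set (Set G) :=
  {P | hG.IsIrreducible P ∧ ∀ Q : Set H, hH.IsIrreducible Q → f ⁻¹' P ⊆ Q → Q ∈ U}

namespace HilbertAlgebra

variable {H : Type*} (hH : HilbertAlgebra H)

lemma aux_imp_self (x : H) : hH.imp x x = hH.one := by
  have A := hH.ax2 x (hH.imp x x) x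
  rw [hH.ax1 x (hH.imp x x), hH.ax1 x x] at A
  have B := hH.ax1 (hH.imp hH.one (hH.imp x x)) hH.one
  rw [A] at B
  have Gg := hH.ax3 _ _ B A
  have C := hH.ax1 (hH.imp x x) hH.one
  rw [Gg] at C
  exact hH.ax3 _ _ C Gg

lemma aux_imp_one (a : H) : hH.imp a hH.one = hH.one := by
  conv_lhs => rw [← hH.aux_imp_self a]
  exact hH.ax1 a a

lemma aux_eq_one {a : H} (h : hH.imp hH.one a = hH.one) : a = hH.one :=
  hH.ax3 a hH.one (hH.aux_imp_one a) h

lemma aux_one_imp (a : H) : hH.imp hH.one a = a := by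
  have s := hH.ax2 (hH.imp hH.one a) hH.one a
  rw [hH.aux_imp_self (hH.imp hH.one a), hH.aux_imp_one (hH.imp hH.one a)] at s
  exact hH.ax3 _ _ (hH.aux_eq_one (hH.aux_eq_one s)) (hH.ax1 a hH.one)

lemma aux_mono {b c : H} (h : hH.imp b c = hH.one) (a : H) :
    hH.imp (hH.imp a b) (hH.imp a c) = hH.one := by
  have s := hH.ax2 a b c
  rw [h, hH.aux_imp_one a, hH.aux_one_imp] at s
  exact s

lemma aux_trans {a b c : H} (h1 : hH.imp a b = hH.one) (h2 : hH.imp b c = hH.one) :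
    hH.imp a c = hH.one := by
  have h3 := hH.aux_mono h2 a
  rw [h1, hH.aux_one_imp] at h3
  exact h3

end HilbertAlgebra
namespace HilbertAlgebra

variable {H : Type*} (hH : HilbertAlgebra H)

lemma mem_of_le {F : Set H} (hF : hH.IsImplicativeFilter F) {a b : H}
    (ha : a ∈ F) (h : hH.imp a b = hH.one) : b ∈ F :=
  hF.2 a b ha (by rw [h]; exact hF.1)

lemma up_filter {F : Set H} (hF : hH.IsImplicativeFilter F) (a : H) :
    hH.IsImplicativeFilter {x | hH.imp a x ∈ F} := by
  constructor
  · show hH.imp a hH.one ∈ F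
    rw [hH.aux_imp_one]; exact hF.1
  · intro x y hx hxy
    have h1 : hH.imp (hH.imp a x) (hH.imp a y) ∈ F :=
      hF.2 _ _ hxy (by rw [hH.ax2]; exact hF.1)
    exact hF.2 _ _ hx h1

lemma subset_up {F : Set H} (hF : hH.IsImplicativeFilter F) (a : H) :
    F ⊆ {x | hH.imp a x ∈ F} :=
  fun x hx => hH.mem_of_le hF hx (hH.ax1 x a)

/-- Iterated implication `a₁ → (a₂ → ⋯ → x)`. -/
def fold (l : List H) (x : H) : H := l.foldr hH.imp x

lemma fold_nil (x : H) : hH.fold [] x = x := rfl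

lemma fold_cons (a : H) (l : List H) (x : H) :
    hH.fold (a :: l) x = hH.imp a (hH.fold l x) := rfl

lemma fold_append (l₁ l₂ : List H) (x : H) :
    hH.fold (l₁ ++ l₂) x = hH.fold l₁ (hH.fold l₂ x) := List.foldr_append

lemma fold_mem {F : Set H} (hF : hH.IsImplicativeFilter F) {x : H} (hx : x ∈ F)
    (l : List H) : hH.fold l x ∈ F := by
  induction l with
  | nil => exact hx
  | cons a l ih => exact hH.mem_of_le hF ih (hH.ax1 _ a)

lemma fold_le (l : List H) (x : H) : hH.imp x (hH.fold l x) = hH.one := by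
  induction l with
  | nil => exact hH.aux_imp_self x
  | cons a l ih => exact hH.aux_trans ih (hH.ax1 _ a)

lemma fold_mono {u v : H} (h : hH.imp u v = hH.one) (l : List H) :
    hH.imp (hH.fold l u) (hH.fold l v) = hH.one := by
  induction l with
  | nil => exact h
  | cons a l ih => exact hH.aux_mono ih a

lemma fold_S (l : List H) (x y : H) :
    hH.imp (hH.fold l (hH.imp x y)) (hH.imp (hH.fold l x) (hH.fold l y)) = hH.one := by
  induction l with
  | nil => exact hH.aux_imp_self _
  | cons a l ih =>
    exact hH.aux_trans (hH.aux_mono ih a) (hH.ax2 a (hH.fold l x) (hH.fold l y))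

lemma fold_all_mem {F : Set H} (hF : hH.IsImplicativeFilter F) {c : H} :
    ∀ l : List H, (∀ a ∈ l, a ∈ F) → hH.fold l c ∈ F → c ∈ F := by
  intro l
  induction l with
  | nil => exact fun _ h => h
  | cons a l ih =>
    intro hmem hfold
    exact ih (fun x hx => hmem x (List.mem_cons_of_mem a hx))
      (hF.2 a _ (hmem a List.mem_cons_self) hfold)

lemma codirected {Q : Set H} (hQ : hH.IsIrreducible Q) {a b : H} (ha : a ∉ Q) (hb : b ∉ Q) :
    ∃ c, c ∉ Q ∧ hH.imp a c ∈ Q ∧ hH.imp b c ∈ Q := by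
  by_contra hcon
  push_neg at hcon
  have hQF := hQ.1
  have heq : Q = {x | hH.imp a x ∈ Q} ∩ {x | hH.imp b x ∈ Q} := by
    apply Set.Subset.antisymm
    · exact Set.subset_inter (hH.subset_up hQF a) (hH.subset_up hQF b)
    · rintro c ⟨hc1, hc2⟩
      by_contra hcQ
      exact hcon c hcQ hc1 hc2
  have hself : ∀ z : H, z ∈ {x | hH.imp z x ∈ Q} := by
    intro z; show hH.imp z z ∈ Q; rw [hH.aux_imp_self]; exact hQF.1
  rcases hQ.2.2 _ _ (hH.up_filter hQF a) (hH.up_filter hQF b) heq with h | h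
  · exact ha (h ▸ hself a)
  · exact hb (h ▸ hself b)

end HilbertAlgebra
open HilbertAlgebra in
lemma hilbert_extend_lemma {H G : Type*} (hH : HilbertAlgebra H) (hG : HilbertAlgebra G)
    (f : H → G) (hf : hH.IsHom hG f) {P : Set G} {Q : Set H}
    (hP : hG.IsImplicativeFilter P) (hQ : hH.IsIrreducible Q) (hPQ : f ⁻¹' P ⊆ Q) :
    ∃ M : Set G, hG.IsIrreducible M ∧ P ⊆ M ∧ f ⁻¹' M = Q := by
  have map_fold : ∀ (l : List H) (c : H), f (hH.fold l c) = hG.fold (l.map f) (f c) := by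
    intro l c
    induction l with
    | nil => rfl
    | cons a l ih =>
      show f (hH.imp a (hH.fold l c)) = hG.imp (f a) (hG.fold (l.map f) (f c))
      rw [hf.2, ih]
  set Gen : Set G := {x | ∃ l : List H, (∀ q ∈ l, q ∈ Q) ∧ hG.fold (l.map f) x ∈ P} with hGen
  have hPGen : P ⊆ Gen := fun x hx => ⟨[], by simp, hx⟩
  have hGenFil : hG.IsImplicativeFilter Gen := by
    constructor
    · exact ⟨[], by simp, hP.1⟩
    · rintro x y ⟨l₁, hl₁, hx⟩ ⟨l₂, hl₂, hxy⟩
      refine ⟨l₂ ++ l₁, ?_, ?_⟩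
      · intro q hq; rcases List.mem_append.1 hq with h | h
        exacts [hl₂ q h, hl₁ q h]
      · rw [List.map_append]
        set m₁ := l₁.map f
        set m₂ := l₂.map f
        have h1 : hG.fold (m₂ ++ m₁) x ∈ P := by
          rw [hG.fold_append]; exact hG.fold_mem hP hx m₂
        have h2 : hG.fold (m₂ ++ m₁) (hG.imp x y) ∈ P := by
          rw [hG.fold_append]
          exact hG.mem_of_le hP hxy (hG.fold_mono (hG.fold_le m₁ (hG.imp x y)) m₂)
        have h3 := hG.fold_S (m₂ ++ m₁) x y
        exact hP.2 _ _ h1 (hP.2 _ _ h2 (by rw [h3]; exact hP.1))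
  have hfQ : ∀ q ∈ Q, f q ∈ Gen := by
    intro q hq
    refine ⟨[q], by simpa using hq, ?_⟩
    show hG.imp (f q) (f q) ∈ P
    rw [hG.aux_imp_self]; exact hP.1
  have hGenQ : ∀ c : H, f c ∈ Gen → c ∈ Q := by
    rintro c ⟨l, hl, hc⟩
    rw [← map_fold] at hc
    exact hH.fold_all_mem hQ.1 l hl (hPQ hc)
  set S : Set (Set G) :=
    {F' | hG.IsImplicativeFilter F' ∧ Gen ⊆ F' ∧ ∀ c : H, f c ∈ F' → c ∈ Q} with hS
  have hGenS : Gen ∈ S := ⟨hGenFil, le_refl _, hGenQ⟩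
  have hzorn : ∀ c ⊆ S, IsChain (· ⊆ ·) c → c.Nonempty → ∃ ub ∈ S, ∀ s ∈ c, s ⊆ ub := by
    intro c hcS hchain hcne
    refine ⟨⋃₀ c, ⟨⟨?_, ?_⟩, ?_, ?_⟩, fun s hs => Set.subset_sUnion_of_mem hs⟩
    · obtain ⟨F0, hF0⟩ := hcne
      exact ⟨F0, hF0, (hcS hF0).1.1⟩
    · rintro a b ⟨F1, hF1, ha⟩ ⟨F2, hF2, hab⟩
      rcases hchain.total hF1 hF2 with h | h
      · exact ⟨F2, hF2, (hcS hF2).1.2 a b (h ha) hab⟩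
      · exact ⟨F1, hF1, (hcS hF1).1.2 a b ha (h hab)⟩
    · obtain ⟨F0, hF0⟩ := hcne
      exact (hcS hF0).2.1.trans (Set.subset_sUnion_of_mem hF0)
    · rintro c' ⟨F1, hF1, hc'⟩
      exact (hcS hF1).2.2 c' hc'
  obtain ⟨M, hGenM, hMmax⟩ := zorn_subset_nonempty S hzorn Gen hGenS
  have hMS := hMmax.prop
  have hMfil := hMS.1
  refine ⟨M, ⟨hMfil, ?_, ?_⟩, hPGen.trans hGenM, ?_⟩
  · -- M ≠ univ
    have hQne : ∃ c : H, c ∉ Q := by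
      by_contra h; push_neg at h
      exact hQ.2.1 (Set.eq_univ_iff_forall.2 h)
    obtain ⟨c, hc⟩ := hQne
    intro h
    exact hc (hMS.2.2 c (h ▸ Set.mem_univ _))
  · -- meet-irreducible
    intro F₁ F₂ hF₁ hF₂ heq
    by_contra hcon
    push_neg at hcon
    have hMF₁ : M ⊆ F₁ := heq ▸ Set.inter_subset_left
    have hMF₂ : M ⊆ F₂ := heq ▸ Set.inter_subset_right
    obtain ⟨a, haF₁, haM⟩ := Set.not_subset.1 (fun h => hcon.1 (Set.Subset.antisymm hMF₁ h))
    obtain ⟨b, hbF₂, hbM⟩ := Set.not_subset.1 (fun h => hcon.2 (Set.Subset.antisymm hMF₂ h))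
    have key : ∀ z : G, z ∉ M → ∃ c₁ : H, c₁ ∉ Q ∧ hG.imp z (f c₁) ∈ M := by
      intro z hz
      set D : Set G := {x | hG.imp z x ∈ M}
      have hDfil := hG.up_filter hMfil z
      have hMD : M ⊆ D := hG.subset_up hMfil z
      have hzD : z ∈ D := by show hG.imp z z ∈ M; rw [hG.aux_imp_self]; exact hMfil.1
      have hDnS : D ∉ S := by
        intro hDS
        exact hz (hMmax.2 hDS hMD hzD)
      have : ¬ ∀ c : H, f c ∈ D → c ∈ Q := fun h => hDnS ⟨hDfil, hGenM.trans hMD, h⟩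
      push_neg at this
      obtain ⟨c₁, hc₁D, hc₁Q⟩ := this
      exact ⟨c₁, hc₁Q, hc₁D⟩
    obtain ⟨c₁, hc₁Q, hac₁⟩ := key a haM
    obtain ⟨c₂, hc₂Q, hbc₂⟩ := key b hbM
    obtain ⟨c, hcQ, hc₁c, hc₂c⟩ := hH.codirected hQ hc₁Q hc₂Q
    have hfc : ∀ (z : G) (c' : H), hG.imp z (f c') ∈ M → hH.imp c' c ∈ Q → hG.imp z (f c) ∈ M := by
      intro z c' h1 h2
      have h3 : hG.imp (f c') (f c) ∈ M := by
        have := hfQ _ h2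
        rw [hf.2] at this
        exact hGenM this
      have h4 : hG.imp z (hG.imp (f c') (f c)) ∈ M := hG.mem_of_le hMfil h3 (hG.ax1 _ z)
      have h5 : hG.imp (hG.imp z (f c')) (hG.imp z (f c)) ∈ M :=
        hMfil.2 _ _ h4 (by rw [hG.ax2]; exact hMfil.1)
      exact hMfil.2 _ _ h1 h5
    have hfc₁ : f c ∈ F₁ := hF₁.2 a (f c) haF₁ (hMF₁ (hfc a c₁ hac₁ hc₁c))
    have hfc₂ : f c ∈ F₂ := hF₂.2 b (f c) hbF₂ (hMF₂ (hfc b c₂ hbc₂ hc₂c))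
    exact hcQ (hMS.2.2 c (heq ▸ ⟨hfc₁, hfc₂⟩))
  · -- f ⁻¹' M = Q
    apply Set.Subset.antisymm
    · exact fun c hc => hMS.2.2 c hc
    · exact fun q hq => hGenM (hfQ q hq)
theorem stmt_7 {H G : Type*} (hH : HilbertAlgebra H) (hG : HilbertAlgebra G) (f : H → G)
    (hf : hH.IsHom hG f) :
    (∀ U : Set (Set H), hH.IsUpsetX U → hG.IsUpsetX (ghat hH hG f U)) ∧
    (ghat hH hG f {P | hH.IsIrreducible P} = {P | hG.IsIrreducible P}) ∧
    (∀ U V : Set (Set H), hH.IsUpsetX U → hH.IsUpsetX V →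
      ghat hH hG f (U ∩ V) = ghat hH hG f U ∩ ghat hH hG f V) ∧
    (∀ U V : Set (Set H), hH.IsUpsetX U → hH.IsUpsetX V →
      ghat hH hG f (hH.impUps U V) = hG.impUps (ghat hH hG f U) (ghat hH hG f V)) := by
  refine ⟨?_, ?_, ?_, ?_⟩
  · -- (i) ghat of an upset is an upset
    intro U hU
    refine ⟨fun P hP => hP.1, ?_⟩
    rintro P P' ⟨hPirr, hPcond⟩ hP'irr hsub
    exact ⟨hP'irr, fun Q hQ h => hPcond Q hQ ((Set.preimage_mono hsub).trans h)⟩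
  · -- (ii)
    ext P
    exact ⟨fun h => h.1, fun h => ⟨h, fun Q hQ _ => hQ⟩⟩
  · -- (iii)
    intro U V _ _
    ext P
    constructor
    · rintro ⟨hPirr, hcond⟩
      exact ⟨⟨hPirr, fun Q hQ h => (hcond Q hQ h).1⟩, ⟨hPirr, fun Q hQ h => (hcond Q hQ h).2⟩⟩
    · rintro ⟨⟨hPirr, h1⟩, ⟨_, h2⟩⟩
      exact ⟨hPirr, fun Q hQ h => ⟨h1 Q hQ h, h2 Q hQ h⟩⟩
  · -- (iv)
    intro U V hU _
    ext P
    constructor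
    · rintro ⟨hPirr, hcond⟩
      refine ⟨hPirr, ?_⟩
      intro P' hP'irr hPP' hP'U
      refine ⟨hP'irr, ?_⟩
      intro Q hQ hsub
      have hQU : Q ∈ U := hP'U.2 Q hQ hsub
      have hfPQ : f ⁻¹' P ⊆ Q := (Set.preimage_mono hPP').trans hsub
      exact (hcond Q hQ hfPQ).2 Q hQ subset_rfl hQU
    · rintro ⟨hPirr, hcond⟩
      refine ⟨hPirr, ?_⟩
      intro Q hQ hfPQ
      refine ⟨hQ, ?_⟩
      intro R hR hQR hRU
      obtain ⟨M, hMirr, hPM, hfM⟩ :=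
        hilbert_extend_lemma hH hG f hf hPirr.1 hR (fun x hx => hQR (hfPQ hx))
      have hMU : M ∈ ghat hH hG f U := by
        refine ⟨hMirr, ?_⟩
        intro S hS hsub
        exact hU.2 R S hRU hS (hfM ▸ hsub)
      have hMV := hcond M hMirr hPM hMU
      exact hMV.2 R hR (hfM ▸ subset_rfl)
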